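/- Let G be a connected real Lie group arising as G = 𝔾(ℝ)⁰ for a Zariski-connected ℝ-algebraic group 𝔾, let Γ be a dense subgroup of G, and let π : Γ → G be a group homomorphism with Zariski-dense image. Then for every identity neighborhood U ⊆ G, the set π(U ∩ Γ) is Zariski-dense in 𝔾. -/

import Mathlib

/-- A subset of `n × n` real matrices is Zariski-closed if it is the common zero locus of a set
of polynomials in the matrix entries. -/
def MatZariskiClosed (n : ℕ) (S : Set (Matrix (Fin n) (Fin n) ℝ)) : Prop :=
  ∃ T : Set (MvPolynomial (Fin n × Fin n) ℝ),
    S = {M | ∀ p ∈ T, MvPolynomial.eval (fun q => M q.1 q.2) p = 0}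

namespace Stmt16Aux

open Pointwise

/-- The vanishing ideal of a set of matrices. -/
noncomputable def vId (n : ℕ) (A : Set (Matrix (Fin n) (Fin n) ℝ)) :
    Ideal (MvPolynomial (Fin n × Fin n) ℝ) where
  carrier := {p | ∀ M ∈ A, MvPolynomial.eval (fun q => M q.1 q.2) p = 0}
  add_mem' := fun {a b} ha hb M hM => by rw [map_add, ha M hM, hb M hM, add_zero]
  zero_mem' := fun M _ => map_zero _
  smul_mem' := fun c p hp M hM => by
    rw [smul_eq_mul, map_mul, hp M hM, mul_zero]

/-- The Zariski closure of a set of matrices. -/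
def zCl (n : ℕ) (A : Set (Matrix (Fin n) (Fin n) ℝ)) : Set (Matrix (Fin n) (Fin n) ℝ) :=
  {M | ∀ p ∈ vId n A, MvPolynomial.eval (fun q => M q.1 q.2) p = 0}

lemma subset_zCl {n : ℕ} {A : Set (Matrix (Fin n) (Fin n) ℝ)} : A ⊆ zCl n A :=
  fun M hM p hp => hp M hM

lemma zCl_zar {n : ℕ} (A : Set (Matrix (Fin n) (Fin n) ℝ)) :
    MatZariskiClosed n (zCl n A) :=
  ⟨(vId n A : Set (MvPolynomial (Fin n × Fin n) ℝ)), rfl⟩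

lemma zCl_min {n : ℕ} {A S : Set (Matrix (Fin n) (Fin n) ℝ)} (hS : MatZariskiClosed n S)
    (hAS : A ⊆ S) : zCl n A ⊆ S := by
  obtain ⟨T, rfl⟩ := hS
  intro M hM p hpT
  exact hM p (fun M' hM' => hAS hM' p hpT)

lemma vId_anti {n : ℕ} {A B : Set (Matrix (Fin n) (Fin n) ℝ)} (h : A ⊆ B) :
    vId n B ≤ vId n A :=
  fun _ hp M hM => hp M (h hM)

lemma zCl_congr {n : ℕ} {A B : Set (Matrix (Fin n) (Fin n) ℝ)}
    (h : vId n A = vId n B) : zCl n A = zCl n B := by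
  unfold zCl; rw [h]

/-- The preimage of a Zariski-closed set under left multiplication is Zariski closed. -/
lemma zar_mul_preimage {n : ℕ} (g : Matrix (Fin n) (Fin n) ℝ)
    (S : Set (Matrix (Fin n) (Fin n) ℝ)) (hS : MatZariskiClosed n S) :
    MatZariskiClosed n {M | g * M ∈ S} := by
  obtain ⟨T, rfl⟩ := hS
  refine ⟨(MvPolynomial.bind₁
      (fun q : Fin n × Fin n => ∑ k, MvPolynomial.C (g q.1 k) * MvPolynomial.X (k, q.2))) '' T,
    ?_⟩
  have key : ∀ (M : Matrix (Fin n) (Fin n) ℝ) (p : MvPolynomial (Fin n × Fin n) ℝ),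
      MvPolynomial.eval (fun q : Fin n × Fin n => M q.1 q.2)
        (MvPolynomial.bind₁
          (fun q : Fin n × Fin n => ∑ k, MvPolynomial.C (g q.1 k) * MvPolynomial.X (k, q.2)) p)
      = MvPolynomial.eval (fun q : Fin n × Fin n => (g * M) q.1 q.2) p := by
    intro M p
    refine (MvPolynomial.eval₂Hom_bind₁ (RingHom.id ℝ) _ _ p).trans ?_
    have hfun : (fun i : Fin n × Fin n =>
        (MvPolynomial.eval₂Hom (RingHom.id ℝ) fun q : Fin n × Fin n => M q.1 q.2)
          (∑ k, MvPolynomial.C (g i.1 k) * MvPolynomial.X (k, i.2)))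
        = fun q : Fin n × Fin n => (g * M) q.1 q.2 := by
      funext q; simp [Matrix.mul_apply]
    show MvPolynomial.eval _ p = MvPolynomial.eval _ p
    rw [hfun]
  ext M
  simp only [Set.mem_setOf_eq, Set.forall_mem_image, key]

/-- Shrinking lemma: every open identity neighborhood contains a symmetric open
identity neighborhood whose square is inside. -/
lemma shrink {Gr : Type*} [Group Gr] [TopologicalSpace Gr] [IsTopologicalGroup Gr]
    (U : Set Gr) (hU : IsOpen U) (h1 : (1 : Gr) ∈ U) :
    ∃ V : Set Gr, IsOpen V ∧ (1 : Gr) ∈ V ∧ V⁻¹ = V ∧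
      (∀ a ∈ V, ∀ b ∈ V, a * b ∈ U) ∧ V ⊆ U := by
  obtain ⟨W, hWo, hW1, hWW⟩ := exists_open_nhds_one_mul_subset (hU.mem_nhds h1)
  have hWU : W ⊆ U := by
    intro a ha
    have := hWW (Set.mul_mem_mul ha hW1)
    simpa using this
  refine ⟨W ∩ W⁻¹, hWo.inter hWo.inv, ⟨hW1, by simp [hW1]⟩, ?_, ?_, fun a ha => hWU ha.1⟩
  · rw [Set.inter_inv, inv_inv, Set.inter_comm]
  · intro a ha b hb
    exact hWW (Set.mul_mem_mul ha.1 hb.1)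

/-- If `Γ` is dense in the connected group `G` and `V` is an open identity neighborhood,
then `Γ ∩ V` generates `Γ`. -/
lemma generation {n : ℕ} (G Γ : Subgroup (GL (Fin n) ℝ))
    (hconn : IsConnected (G : Set (GL (Fin n) ℝ))) (hΓG : Γ ≤ G)
    (hdense : (G : Set (GL (Fin n) ℝ)) ⊆ closure (Γ : Set (GL (Fin n) ℝ)))
    (V : Set (GL (Fin n) ℝ)) (hVo : IsOpen V) (hV1 : (1 : GL (Fin n) ℝ) ∈ V) :
    ∀ γ : GL (Fin n) ℝ, γ ∈ Γ → γ ∈ Subgroup.closure ((Γ : Set (GL (Fin n) ℝ)) ∩ V) := by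
  obtain ⟨V₂, hV₂o, hV₂1, hV₂s, hV₂m, hV₂sub⟩ := shrink V hVo hV1
  set H := Subgroup.closure ((Γ : Set (GL (Fin n) ℝ)) ∩ V₂) with hH
  have hHΓ : H ≤ Γ := (Subgroup.closure_le Γ).mpr Set.inter_subset_left
  have hopen : ∀ g : GL (Fin n) ℝ, IsOpen ((fun y => g⁻¹ * y) ⁻¹' V₂) :=
    fun g => hV₂o.preimage (continuous_const.mul continuous_id)
  have hsym : ∀ a b : GL (Fin n) ℝ, a⁻¹ * b ∈ V₂ → b⁻¹ * a ∈ V₂ := by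
    intro a b hab
    have : (a⁻¹ * b)⁻¹ ∈ V₂⁻¹ := Set.inv_mem_inv.mpr hab
    rw [hV₂s] at this
    simpa [mul_inv_rev] using this
  -- if `g` is in the closure of `H`, then every point of `G ∩ g V₂` is in the closure of `H`
  have step : ∀ g, g ∈ closure (H : Set (GL (Fin n) ℝ)) →
      ∀ x, x ∈ (G : Set (GL (Fin n) ℝ)) → g⁻¹ * x ∈ V₂ →
      x ∈ closure (H : Set (GL (Fin n) ℝ)) := by
    intro g hg x hxG hxV
    rw [mem_closure_iff]
    intro O hOo hxO
    obtain ⟨γ, ⟨hγO, hγV⟩, hγΓ⟩ :=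
      mem_closure_iff.mp (hdense hxG) (O ∩ (fun y => g⁻¹ * y) ⁻¹' V₂)
        (hOo.inter (hopen g)) ⟨hxO, hxV⟩
    obtain ⟨h, hhV, hhH⟩ :=
      mem_closure_iff.mp hg ((fun y => γ⁻¹ * y) ⁻¹' V₂) (hopen γ) (hsym g γ hγV)
    have h1 : h⁻¹ * γ ∈ V₂ := hsym γ h hhV
    have h2 : h⁻¹ * γ ∈ Γ := mul_mem (inv_mem (hHΓ hhH)) hγΓ
    have hγH : γ ∈ H := by
      have := mul_mem hhH (Subgroup.subset_closure (k := (Γ : Set (GL (Fin n) ℝ)) ∩ V₂) ⟨h2, h1⟩)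
      simpa using this
    exact ⟨γ, hγO, hγH⟩
  have hGsub : (G : Set (GL (Fin n) ℝ)) ⊆ closure (H : Set (GL (Fin n) ℝ)) := by
    by_contra hc
    obtain ⟨x0, hx0G, hx0⟩ := Set.not_subset.mp hc
    set u : Set (GL (Fin n) ℝ) :=
      ⋃ g ∈ (G : Set (GL (Fin n) ℝ)) ∩ closure (H : Set (GL (Fin n) ℝ)),
        (fun y => g⁻¹ * y) ⁻¹' V₂ with hu
    have huo : IsOpen u := isOpen_biUnion (fun g _ => hopen g)
    have hvo : IsOpen (closure (H : Set (GL (Fin n) ℝ)))ᶜ := isClosed_closure.isOpen_compl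
    have hcover : (G : Set (GL (Fin n) ℝ)) ⊆ u ∪ (closure (H : Set (GL (Fin n) ℝ)))ᶜ := by
      intro g hg
      by_cases h : g ∈ closure (H : Set (GL (Fin n) ℝ))
      · exact Or.inl (Set.mem_biUnion ⟨hg, h⟩ (by simp [hV₂1]))
      · exact Or.inr h
    have h1u : ((G : Set (GL (Fin n) ℝ)) ∩ u).Nonempty := by
      refine ⟨1, G.one_mem, Set.mem_biUnion ⟨G.one_mem, subset_closure H.one_mem⟩ ?_⟩
      simp [hV₂1]
    have h2v : ((G : Set (GL (Fin n) ℝ)) ∩ (closure (H : Set (GL (Fin n) ℝ)))ᶜ).Nonempty :=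
      ⟨x0, hx0G, hx0⟩
    obtain ⟨z, hzG, hzu, hzv⟩ := hconn.isPreconnected u _ huo hvo hcover h1u h2v
    obtain ⟨g, hg, hz⟩ := Set.mem_iUnion₂.mp hzu
    exact hzv (step g hg.2 z hzG hz)
  intro γ hγ
  obtain ⟨h, hhV, hhH⟩ :=
    mem_closure_iff.mp (hGsub (hΓG hγ)) ((fun y => γ⁻¹ * y) ⁻¹' V₂) (hopen γ) (by simp [hV₂1])
  have h1 : h⁻¹ * γ ∈ V₂ := hsym γ h hhV
  have h2 : h⁻¹ * γ ∈ Γ := mul_mem (inv_mem (hHΓ hhH)) hγ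
  have hγH : γ ∈ H := by
    have := mul_mem hhH (Subgroup.subset_closure (k := (Γ : Set (GL (Fin n) ℝ)) ∩ V₂) ⟨h2, h1⟩)
    simpa using this
  exact Subgroup.closure_mono (Set.inter_subset_inter_right _ hV₂sub) hγH

end Stmt16Aux

open Stmt16Aux in
/-- Let `G ≤ GL_n(ℝ)` be a connected real Lie group of the form `𝔾(ℝ)⁰`, `Γ ≤ G` a dense
subgroup, and `π : Γ → G` a group homomorphism with Zariski-dense image. Then for every
identity neighborhood `U`, the set `π(U ∩ Γ)` is Zariski-dense in `𝔾`. -/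
theorem stmt16 (n : ℕ) (G : Subgroup (GL (Fin n) ℝ))
    -- `G` is connected for the real topology
    (hconn : IsConnected (G : Set (GL (Fin n) ℝ)))
    -- `Γ` is a dense subgroup of `G`
    (Γ : Subgroup (GL (Fin n) ℝ)) (hΓG : Γ ≤ G)
    (hdense : (G : Set (GL (Fin n) ℝ)) ⊆ closure (Γ : Set (GL (Fin n) ℝ)))
    -- `π : Γ → G` a homomorphism whose image is Zariski-dense in `G`
    (π : Γ →* GL (Fin n) ℝ) (hπG : ∀ γ : Γ, π γ ∈ G)
    (hZdense : ∀ S : Set (Matrix (Fin n) (Fin n) ℝ), MatZariskiClosed n S →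
      {M | ∃ γ : Γ, M = ((π γ : GL (Fin n) ℝ) : Matrix (Fin n) (Fin n) ℝ)} ⊆ S →
      ((fun g : GL (Fin n) ℝ => (g : Matrix (Fin n) (Fin n) ℝ)) '' G) ⊆ S) :
    -- then for any identity neighborhood `U`, `π(U ∩ Γ)` is Zariski-dense in `G`
    ∀ U : Set (GL (Fin n) ℝ), IsOpen U → (1 : GL (Fin n) ℝ) ∈ U →
      ∀ S : Set (Matrix (Fin n) (Fin n) ℝ), MatZariskiClosed n S →
        {M | ∃ γ : Γ, (γ : GL (Fin n) ℝ) ∈ U ∧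
            M = ((π γ : GL (Fin n) ℝ) : Matrix (Fin n) (Fin n) ℝ)} ⊆ S →
        ((fun g : GL (Fin n) ℝ => (g : Matrix (Fin n) (Fin n) ℝ)) '' G) ⊆ S := by
  intro U hUo hU1 S hS hsub
  classical
  -- notation
  set Aset : Set (GL (Fin n) ℝ) → Set (Matrix (Fin n) (Fin n) ℝ) :=
    fun V => {M | ∃ γ : Γ, (γ : GL (Fin n) ℝ) ∈ V ∧
      M = ((π γ : GL (Fin n) ℝ) : Matrix (Fin n) (Fin n) ℝ)} with hAset
  -- the family of vanishing ideals of `π(Γ ∩ V)` over symmetric open `V ⊆ U`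
  set 𝒮 : Set (Ideal (MvPolynomial (Fin n × Fin n) ℝ)) :=
    {I | ∃ V : Set (GL (Fin n) ℝ), IsOpen V ∧ (1 : GL (Fin n) ℝ) ∈ V ∧ V⁻¹ = V ∧ V ⊆ U ∧
      I = vId n (Aset V)} with h𝒮
  have hnonempty : 𝒮.Nonempty := by
    obtain ⟨V, hVo, hV1, hVs, _, hVsub⟩ := shrink U hUo hU1
    exact ⟨vId n (Aset V), V, hVo, hV1, hVs, hVsub, rfl⟩
  obtain ⟨I₀, ⟨V₀, hV₀o, hV₀1, hV₀s, hV₀U, hI₀⟩, hI₀max⟩ :=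
    (set_has_maximal_iff_noetherian.mpr inferInstance) 𝒮 hnonempty
  obtain ⟨V₁, hV₁o, hV₁1, hV₁s, hV₁m, hV₁sub⟩ := shrink V₀ hV₀o hV₀1
  have hA10 : Aset V₁ ⊆ Aset V₀ := by
    rintro M ⟨γ, hγ, rfl⟩
    exact ⟨γ, hV₁sub hγ, rfl⟩
  have hle : vId n (Aset V₀) ≤ vId n (Aset V₁) := vId_anti hA10
  have hId : vId n (Aset V₀) = vId n (Aset V₁) := by
    have hmem : vId n (Aset V₁) ∈ 𝒮 :=
      ⟨V₁, hV₁o, hV₁1, hV₁s, hV₁sub.trans hV₀U, rfl⟩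
    have hnlt := hI₀max _ hmem
    rw [hI₀] at hnlt
    exact hle.lt_or_eq.resolve_left hnlt
  set Z := zCl n (Aset V₀) with hZ
  have hZzar : MatZariskiClosed n Z := zCl_zar _
  have hZ1 : zCl n (Aset V₁) = Z := (zCl_congr hId).symm
  have hZone : (1 : Matrix (Fin n) (Fin n) ℝ) ∈ Z := by
    refine subset_zCl ⟨1, ?_, ?_⟩
    · simpa using hV₀1
    · simp
  -- stability of `Z` under multiplication by `π(Γ ∩ V₁)`
  have hstab : ∀ γ : Γ, (γ : GL (Fin n) ℝ) ∈ V₁ →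
      ∀ M ∈ Z, ((π γ : GL (Fin n) ℝ) : Matrix (Fin n) (Fin n) ℝ) * M ∈ Z := by
    intro γ hγ M hM
    have hpre : MatZariskiClosed n
        {M | ((π γ : GL (Fin n) ℝ) : Matrix (Fin n) (Fin n) ℝ) * M ∈ Z} :=
      zar_mul_preimage _ _ hZzar
    have hsub1 : Aset V₁ ⊆
        {M | ((π γ : GL (Fin n) ℝ) : Matrix (Fin n) (Fin n) ℝ) * M ∈ Z} := by
      rintro M' ⟨δ, hδ, rfl⟩
      show ((π γ : GL (Fin n) ℝ) : Matrix (Fin n) (Fin n) ℝ) *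
        ((π δ : GL (Fin n) ℝ) : Matrix (Fin n) (Fin n) ℝ) ∈ Z
      have hmul : ((π (γ * δ) : GL (Fin n) ℝ) : Matrix (Fin n) (Fin n) ℝ)
          = ((π γ : GL (Fin n) ℝ) : Matrix (Fin n) (Fin n) ℝ) *
            ((π δ : GL (Fin n) ℝ) : Matrix (Fin n) (Fin n) ℝ) := by
        rw [map_mul]; rfl
      rw [← hmul]
      exact subset_zCl ⟨γ * δ, hV₁m _ hγ _ hδ, rfl⟩
    have : zCl n (Aset V₁) ⊆ _ := zCl_min hpre hsub1
    rw [hZ1] at this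
    exact this hM
  -- every element of `Γ` stabilizes `Z`
  have hHle : Subgroup.closure ((Γ : Set (GL (Fin n) ℝ)) ∩ V₁) ≤ Γ :=
    (Subgroup.closure_le Γ).mpr Set.inter_subset_left
  have hall : ∀ γ : Γ,
      ∀ M ∈ Z, ((π γ : GL (Fin n) ℝ) : Matrix (Fin n) (Fin n) ℝ) * M ∈ Z := by
    have key : ∀ g : GL (Fin n) ℝ, g ∈ Subgroup.closure ((Γ : Set (GL (Fin n) ℝ)) ∩ V₁) →
        ∀ hg : g ∈ Γ,
          (∀ M ∈ Z, ((π ⟨g, hg⟩ : GL (Fin n) ℝ) : Matrix (Fin n) (Fin n) ℝ) * M ∈ Z) ∧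
          (∀ M ∈ Z, (((π ⟨g, hg⟩)⁻¹ : GL (Fin n) ℝ) : Matrix (Fin n) (Fin n) ℝ) * M ∈ Z) := by
      intro g hgcl
      induction hgcl using Subgroup.closure_induction with
      | mem x hx =>
        intro hg
        constructor
        · exact hstab ⟨x, hg⟩ hx.2
        · have hxinv : x⁻¹ ∈ V₁ := by
            rw [← hV₁s]
            exact Set.inv_mem_inv.mpr hx.2
          have : (π ⟨x, hg⟩)⁻¹ = π ⟨x⁻¹, inv_mem hg⟩ := by
            rw [← map_inv]; rfl
          rw [this]
          exact hstab ⟨x⁻¹, inv_mem hg⟩ hxinv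
      | one =>
        intro hg
        constructor <;> intro M hM <;>
          · have h1 : (⟨(1 : GL (Fin n) ℝ), hg⟩ : Γ) = 1 := rfl
            rw [h1]
            simpa using hM
      | mul x y hx hy ihx ihy =>
        intro hg
        have hxΓ : x ∈ Γ := hHle hx
        have hyΓ : y ∈ Γ := hHle hy
        have hxy : (⟨x * y, hg⟩ : Γ) = ⟨x, hxΓ⟩ * ⟨y, hyΓ⟩ := rfl
        constructor
        · intro M hM
          rw [hxy, map_mul]
          show (((π ⟨x, hxΓ⟩ : GL (Fin n) ℝ) : Matrix (Fin n) (Fin n) ℝ) *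
            ((π ⟨y, hyΓ⟩ : GL (Fin n) ℝ) : Matrix (Fin n) (Fin n) ℝ)) * M ∈ Z
          rw [mul_assoc]
          exact (ihx hxΓ).1 _ ((ihy hyΓ).1 M hM)
        · intro M hM
          rw [hxy, map_mul, mul_inv_rev]
          show (((π ⟨y, hyΓ⟩)⁻¹ : GL (Fin n) ℝ) : Matrix (Fin n) (Fin n) ℝ) *
            (((π ⟨x, hxΓ⟩)⁻¹ : GL (Fin n) ℝ) : Matrix (Fin n) (Fin n) ℝ) * M ∈ Z
          rw [mul_assoc]
          exact (ihy hyΓ).2 _ ((ihx hxΓ).2 M hM)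
      | inv x hx ih =>
        intro hg
        have hxΓ : x ∈ Γ := hHle hx
        have hxe : (⟨x⁻¹, hg⟩ : Γ) = ⟨x, hxΓ⟩⁻¹ := rfl
        constructor
        · intro M hM
          rw [hxe, map_inv]
          exact (ih hxΓ).2 M hM
        · intro M hM
          rw [hxe, map_inv, inv_inv]
          exact (ih hxΓ).1 M hM
    intro γ
    have hγcl := generation G Γ hconn hΓG hdense V₁ hV₁o hV₁1 γ γ.2
    have := (key γ hγcl γ.2).1
    simpa using this
  -- conclude
  have himg : {M | ∃ γ : Γ, M = ((π γ : GL (Fin n) ℝ) : Matrix (Fin n) (Fin n) ℝ)} ⊆ Z := by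
    rintro M ⟨γ, rfl⟩
    have := hall γ 1 hZone
    simpa using this
  have hZS : Z ⊆ S := by
    refine zCl_min hS ?_
    rintro M ⟨γ, hγ, rfl⟩
    exact hsub ⟨γ, hV₀U hγ, rfl⟩
  exact (hZdense Z hZzar himg).trans hZS
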